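/- arXiv:0902.4796 — 4 statements merged into one kernel-verified Lean document; each statement's English description precedes it below -/
import Mathlib

section
/- Suppose there exist a set A ∈ 𝓕 with P(A) > 0, a number ε ∈ (0, 1/2) and real numbers a, b with a ≤ ξ_p ≤ b such that for all ω ∈ A, the conditional distribution G₀(·; ω) puts more than ε mass on (a−ε, a] and more than ε mass on (b, b+ε] (i.e., G₀(a; ω) − G₀(a−ε; ω) > ε and G₀(b+ε; ω) − G₀(b; ω) > ε). Then P(G₀(ξ_p; ·) = 1) < p. -/
open MeasureTheory Set

/-- Let `G₀(y;·)` be a regular conditional distribution function of `X₀` given `𝓒`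
and `ξ_p` the `p`-th quantile of `F` with `F(ξ_p) = p`. If there are `A ∈ 𝓕` with `P(A) > 0`,
`ε ∈ (0,1/2)` and `a ≤ ξ_p ≤ b` such that on `A`, `G₀` puts more than `ε` mass on `(a−ε, a]`
and on `(b, b+ε]`, then `P(G₀(ξ_p;·) = 1) < p`. -/
theorem stmt8 {Ω : Type*} [mΩ : MeasurableSpace Ω] (μ : Measure Ω) [IsProbabilityMeasure μ]
    (X₀ : Ω → ℝ) (hX₀ : Measurable X₀)
    (𝓒 : MeasurableSpace Ω) (h𝓒 : 𝓒 ≤ mΩ)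
    (F : ℝ → ℝ) (hF : ∀ x, F x = (μ {ω | X₀ ω ≤ x}).toReal)
    (p : ℝ) (hp : p ∈ Ioo (0 : ℝ) 1)
    (ξ : ℝ) (hξ : ξ = sInf {x | p ≤ F x}) (hFξ : F ξ = p)
    (G₀ : ℝ → Ω → ℝ) (hGmeas : ∀ y, Measurable (G₀ y))
    (hGver : ∀ y, G₀ y =ᵐ[μ] μ[(fun ω => if X₀ ω ≤ y then (1 : ℝ) else 0) | 𝓒])
    (hGmono : ∀ ω, Monotone (fun y => G₀ y ω))
    (hGrc : ∀ ω y, ContinuousWithinAt (fun y => G₀ y ω) (Ici y) y)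
    (hG01 : ∀ ω y, G₀ y ω ∈ Icc (0 : ℝ) 1)
    (A : Set Ω) (hA : MeasurableSet A) (hPA : 0 < μ A)
    (ε : ℝ) (hε : ε ∈ Ioo (0 : ℝ) (1 / 2))
    (a b : ℝ) (haξ : a ≤ ξ) (hξb : ξ ≤ b)
    (hmass : ∀ ω ∈ A, ε < G₀ a ω - G₀ (a - ε) ω ∧ ε < G₀ (b + ε) ω - G₀ b ω) :
    (μ {ω | G₀ ξ ω = 1}).toReal < p := by
  -- First use the conditional expectation property, then discard `𝓒` (its instance
  -- interferes with instance resolution for `mΩ`).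
  have h12 : ∫ ω, G₀ ξ ω ∂μ = ∫ ω, (if X₀ ω ≤ ξ then (1:ℝ) else 0) ∂μ := by
    have h1 : ∫ ω, G₀ ξ ω ∂μ = ∫ ω, (μ[(fun ω => if X₀ ω ≤ ξ then (1:ℝ) else 0) | 𝓒]) ω ∂μ :=
      integral_congr_ae (hGver ξ)
    exact h1.trans (integral_condExp h𝓒)
  have hGmeas' : ∀ y, @Measurable Ω ℝ mΩ _ (G₀ y) := fun y => (hGmeas y).mono h𝓒 le_rfl
  have hA' : MeasurableSet[mΩ] A := h𝓒 A hA
  clear hGmeas hA hGver h𝓒 𝓒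
  set S : Set Ω := {ω | G₀ ξ ω = 1} with hSdef
  have hS : MeasurableSet S := (hGmeas' ξ) (measurableSet_singleton 1)
  have hAlt : ∀ ω ∈ A, G₀ ξ ω < 1 := by
    intro ω hω
    have h1 : G₀ ξ ω ≤ G₀ b ω := hGmono ω hξb
    have h2 := (hmass ω hω).2
    have h3 : G₀ (b + ε) ω ≤ 1 := (hG01 ω (b + ε)).2
    linarith [hε.1]
  have hdisj : Disjoint S A := by
    rw [Set.disjoint_left]
    intro ω hωS hωA
    exact absurd hωS (ne_of_lt (hAlt ω hωA))
  have hAge : ∀ ω ∈ A, ε ≤ G₀ ξ ω := by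
    intro ω hω
    have h1 : G₀ a ω ≤ G₀ ξ ω := hGmono ω haξ
    have h2 := (hmass ω hω).1
    have h3 : (0:ℝ) ≤ G₀ (a - ε) ω := (hG01 ω (a - ε)).1
    linarith
  have hint : Integrable (G₀ ξ) μ := by
    refine Integrable.mono' (integrable_const (1:ℝ)) (hGmeas' ξ).aestronglyMeasurable ?_
    filter_upwards with ω
    rw [Real.norm_eq_abs, abs_le]
    exact ⟨by linarith [(hG01 ω ξ).1], (hG01 ω ξ).2⟩
  have hI : ∫ ω, G₀ ξ ω ∂μ = p := by
    have h3 : ∫ ω, (if X₀ ω ≤ ξ then (1:ℝ) else 0) ∂μ = (μ {ω | X₀ ω ≤ ξ}).toReal := by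
      have heq : (fun ω => if X₀ ω ≤ ξ then (1:ℝ) else 0)
          = Set.indicator {ω | X₀ ω ≤ ξ} (fun _ => (1:ℝ)) := by
        ext ω; simp [Set.indicator_apply]
      have hms : MeasurableSet {ω | X₀ ω ≤ ξ} := hX₀ measurableSet_Iic
      rw [heq, integral_indicator hms]
      simp [Measure.real_def]
    rw [h12, h3, ← hF ξ, hFξ]
  have hnonneg : 0 ≤ᵐ[μ] G₀ ξ := by
    filter_upwards with ω using (hG01 ω ξ).1
  have hsplit : ∫ ω in S ∪ A, G₀ ξ ω ∂μ = ∫ ω in S, G₀ ξ ω ∂μ + ∫ ω in A, G₀ ξ ω ∂μ :=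
    setIntegral_union hdisj hA' hint.integrableOn hint.integrableOn
  have hle : ∫ ω in S ∪ A, G₀ ξ ω ∂μ ≤ ∫ ω, G₀ ξ ω ∂μ :=
    setIntegral_le_integral hint hnonneg
  have hSval : ∫ ω in S, G₀ ξ ω ∂μ = (μ S).toReal := by
    rw [setIntegral_congr_fun hS (fun ω hω => hω)]
    simp [Measure.real_def]
  have hAval : ε * (μ A).toReal ≤ ∫ ω in A, G₀ ξ ω ∂μ := by
    have h := setIntegral_mono_on (integrableOn_const (measure_lt_top μ A).ne)
      hint.integrableOn hA' hAge
    simpa [mul_comm, Measure.real_def] using h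
  have hApos : 0 < ε * (μ A).toReal :=
    mul_pos hε.1 (ENNReal.toReal_pos hPA.ne' (measure_lt_top μ A).ne)
  have hkey : (μ S).toReal + ε * (μ A).toReal ≤ p := by
    calc (μ S).toReal + ε * (μ A).toReal ≤ ∫ ω in S, G₀ ξ ω ∂μ + ∫ ω in A, G₀ ξ ω ∂μ := by
          rw [hSval]; linarith
      _ = ∫ ω in S ∪ A, G₀ ξ ω ∂μ := hsplit.symm
      _ ≤ ∫ ω, G₀ ξ ω ∂μ := hle
      _ = p := hI
  linarith
end

section
/- Let {W_j : 1 ≤ j ≤ n} be square-integrable real random variables with E W_j = 0 for all j and with covariances depending only on the lag (E W_i W_j = r(|i − j|) for some function r), and suppose n⁻¹ Var(∑_{j=1}^n W_j) = 1. Then for any integer 1 ≤ m₁ ≤ n, |m₁⁻¹ Var(∑_{j=1}^{m₁} W_j) − 1| ≤ 2 ∑_{j=m₁+1}^{n−1} |E W₁ W_{j+1}| + (4/m₁) ∑_{j=1}^{n} j |E W₁ W_{j+1}|. -/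
open MeasureTheory Set Finset

private lemma stmt11_mul_int {Ω : Type*} [MeasurableSpace Ω] {μ : Measure Ω} {f g : Ω → ℝ}
    (hf : MemLp f 2 μ) (hg : MemLp g 2 μ) : Integrable (fun ω => f ω * g ω) μ := by
  refine Integrable.mono' (((hf.integrable_sq.add hg.integrable_sq)).div_const 2)
    (hf.aestronglyMeasurable.mul hg.aestronglyMeasurable) ?_
  filter_upwards with ω
  simp only [Pi.add_apply, Real.norm_eq_abs, abs_mul]
  nlinarith [abs_nonneg (f ω), abs_nonneg (g ω), sq_abs (f ω), sq_abs (g ω),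
    sq_nonneg (|f ω| - |g ω|)]

private lemma stmt11_shift (r : ℕ → ℝ) (k : ℕ) :
    ∑ j ∈ Finset.Icc 1 k, r (k + 1 - j) = ∑ d ∈ Finset.Icc 1 k, r d := by
  rw [show Finset.Icc 1 k = Finset.Ico 1 (k + 1) from (Finset.Ico_add_one_right_eq_Icc 1 k).symm,
    Finset.sum_Ico_eq_sum_range, Finset.sum_Ico_eq_sum_range]
  simp only [Nat.add_sub_cancel]
  rw [← Finset.sum_range_reflect]
  refine Finset.sum_congr rfl fun j hj => ?_
  simp only [Finset.mem_range] at hj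
  congr 1
  omega

private lemma stmt11_dsum (r : ℕ → ℝ) (k : ℕ) :
    ∑ i ∈ Finset.Icc 1 k, ∑ j ∈ Finset.Icc 1 k, r (Nat.dist i j)
      = k * r 0 + 2 * ∑ d ∈ Finset.Icc 1 k, ((k : ℝ) - d) * r d := by
  induction k with
  | zero => simp
  | succ k ih =>
    have hins : Finset.Icc 1 (k + 1) = insert (k + 1) (Finset.Icc 1 k) := by
      ext x; simp only [Finset.mem_Icc, Finset.mem_insert]; omega
    have hnm : (k + 1) ∉ Finset.Icc 1 k := by simp
    have hdist1 : ∀ j ∈ Finset.Icc 1 k, Nat.dist (k + 1) j = k + 1 - j := by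
      intro j hj; simp only [Finset.mem_Icc] at hj; exact Nat.dist_eq_sub_of_le_right (by omega)
    have hdist2 : ∀ i ∈ Finset.Icc 1 k, Nat.dist i (k + 1) = k + 1 - i := by
      intro i hi; simp only [Finset.mem_Icc] at hi; exact Nat.dist_eq_sub_of_le (by omega)
    have h1 : ∑ j ∈ insert (k + 1) (Finset.Icc 1 k), r (Nat.dist (k + 1) j)
        = r 0 + ∑ d ∈ Finset.Icc 1 k, r d := by
      rw [Finset.sum_insert hnm, Nat.dist_self, ← stmt11_shift r k]
      congr 1
      exact Finset.sum_congr rfl fun j hj => by rw [hdist1 j hj]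
    have h2 : ∑ i ∈ Finset.Icc 1 k, ∑ j ∈ insert (k + 1) (Finset.Icc 1 k), r (Nat.dist i j)
        = (∑ d ∈ Finset.Icc 1 k, r d)
          + ∑ i ∈ Finset.Icc 1 k, ∑ j ∈ Finset.Icc 1 k, r (Nat.dist i j) := by
      calc ∑ i ∈ Finset.Icc 1 k, ∑ j ∈ insert (k + 1) (Finset.Icc 1 k), r (Nat.dist i j)
          = ∑ i ∈ Finset.Icc 1 k,
              (r (k + 1 - i) + ∑ j ∈ Finset.Icc 1 k, r (Nat.dist i j)) :=
            Finset.sum_congr rfl fun i hi => by rw [Finset.sum_insert hnm, hdist2 i hi]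
        _ = (∑ i ∈ Finset.Icc 1 k, r (k + 1 - i))
              + ∑ i ∈ Finset.Icc 1 k, ∑ j ∈ Finset.Icc 1 k, r (Nat.dist i j) :=
            Finset.sum_add_distrib
        _ = _ := by rw [stmt11_shift r k]
    have h3 : ∑ d ∈ Finset.Icc 1 k, (((k : ℝ) + 1) - d) * r d
        = (∑ d ∈ Finset.Icc 1 k, ((k : ℝ) - d) * r d) + ∑ d ∈ Finset.Icc 1 k, r d := by
      rw [← Finset.sum_add_distrib]
      exact Finset.sum_congr rfl fun d hd => by ring
    calc ∑ i ∈ Finset.Icc 1 (k + 1), ∑ j ∈ Finset.Icc 1 (k + 1), r (Nat.dist i j)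
        = (r 0 + ∑ d ∈ Finset.Icc 1 k, r d)
            + ((∑ d ∈ Finset.Icc 1 k, r d)
              + ∑ i ∈ Finset.Icc 1 k, ∑ j ∈ Finset.Icc 1 k, r (Nat.dist i j)) := by
          rw [hins, Finset.sum_insert hnm, h1, h2]
      _ = (k + 1 : ℕ) * r 0 + 2 * ∑ d ∈ Finset.Icc 1 (k + 1), (((k + 1 : ℕ) : ℝ) - d) * r d := by
          rw [ih, hins, Finset.sum_insert hnm]
          push_cast
          rw [h3]
          ring

/-- For mean-zero, square-integrable `W₁,…,W_n` with second-order stationary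
covariances `E W_i W_j = r(|i−j|)` and `n⁻¹ Var(∑_{j=1}^n W_j) = 1`, for any `1 ≤ m₁ ≤ n`,
`|m₁⁻¹ Var(∑_{j=1}^{m₁} W_j) − 1| ≤ 2 ∑_{j=m₁+1}^{n−1} |E W₁ W_{j+1}|
  + (4/m₁) ∑_{j=1}^{n} j |E W₁ W_{j+1}|`, where for `j ≥ n` the covariance `E W₁ W_{j+1}`
is interpreted via the stationary extension `r(j)` of the covariance function. -/
theorem stmt11 {Ω : Type*} [MeasurableSpace Ω] (μ : Measure Ω) [IsProbabilityMeasure μ]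
    (n : ℕ) (hn : 1 ≤ n) (W : ℕ → Ω → ℝ) (r : ℕ → ℝ)
    (hsq : ∀ i ∈ Finset.Icc 1 n, MemLp (W i) 2 μ)
    (hmean : ∀ i ∈ Finset.Icc 1 n, ∫ ω, W i ω ∂μ = 0)
    (hcov : ∀ i ∈ Finset.Icc 1 n, ∀ j ∈ Finset.Icc 1 n,
      ∫ ω, W i ω * W j ω ∂μ = r (Nat.dist i j))
    (hvar : (n : ℝ)⁻¹ * ∫ ω, (∑ j ∈ Finset.Icc 1 n, W j ω) ^ 2 ∂μ = 1)
    (m₁ : ℕ) (hm₁ : 1 ≤ m₁) (hm₁n : m₁ ≤ n) :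
    |(m₁ : ℝ)⁻¹ * (∫ ω, (∑ j ∈ Finset.Icc 1 m₁, W j ω) ^ 2 ∂μ) - 1|
      ≤ 2 * ∑ j ∈ Finset.Icc (m₁ + 1) (n - 1), |r j|
        + (4 / (m₁ : ℝ)) * ∑ j ∈ Finset.Icc 1 n, (j : ℝ) * |r j| := by
  have hm0 : (0 : ℝ) < m₁ := by exact_mod_cast hm₁
  have hn0 : (0 : ℝ) < n := by exact_mod_cast hn
  have hmn : (m₁ : ℝ) ≤ n := by exact_mod_cast hm₁n
  -- variance formula
  have key : ∀ k, k ≤ n → ∫ ω, (∑ j ∈ Finset.Icc 1 k, W j ω) ^ 2 ∂μ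
      = (k : ℝ) * r 0 + 2 * ∑ d ∈ Finset.Icc 1 k, ((k : ℝ) - d) * r d := by
    intro k hk
    have hsub : Finset.Icc 1 k ⊆ Finset.Icc 1 n := Finset.Icc_subset_Icc_right hk
    have hint : ∀ i ∈ Finset.Icc 1 k, ∀ j ∈ Finset.Icc 1 k,
        Integrable (fun ω => W i ω * W j ω) μ := fun i hi j hj =>
      stmt11_mul_int (hsq i (hsub hi)) (hsq j (hsub hj))
    calc ∫ ω, (∑ j ∈ Finset.Icc 1 k, W j ω) ^ 2 ∂μ
        = ∫ ω, ∑ i ∈ Finset.Icc 1 k, ∑ j ∈ Finset.Icc 1 k, W i ω * W j ω ∂μ := by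
          congr 1; funext ω; rw [sq, Finset.sum_mul_sum]
      _ = ∑ i ∈ Finset.Icc 1 k, ∫ ω, ∑ j ∈ Finset.Icc 1 k, W i ω * W j ω ∂μ :=
          integral_finset_sum _ fun i hi => integrable_finset_sum _ fun j hj => hint i hi j hj
      _ = ∑ i ∈ Finset.Icc 1 k, ∑ j ∈ Finset.Icc 1 k, ∫ ω, W i ω * W j ω ∂μ :=
          Finset.sum_congr rfl fun i hi => integral_finset_sum _ fun j hj => hint i hi j hj
      _ = ∑ i ∈ Finset.Icc 1 k, ∑ j ∈ Finset.Icc 1 k, r (Nat.dist i j) :=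
          Finset.sum_congr rfl fun i hi => Finset.sum_congr rfl fun j hj =>
            hcov i (hsub hi) j (hsub hj)
      _ = _ := stmt11_dsum r k
  set Sm := ∑ d ∈ Finset.Icc 1 m₁, ((m₁ : ℝ) - d) * r d with hSm
  set Sn := ∑ d ∈ Finset.Icc 1 n, ((n : ℝ) - d) * r d with hSn
  set P := ∑ d ∈ Finset.Icc 1 m₁, ((n : ℝ) - d) * r d with hP
  set Q := ∑ d ∈ Finset.Icc (m₁ + 1) n, ((n : ℝ) - d) * r d with hQ
  set T := ∑ j ∈ Finset.Icc 1 n, (j : ℝ) * |r j| with hT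
  have hTpos : 0 ≤ T := Finset.sum_nonneg fun j _ => by positivity
  have hsplit : Sn = P + Q := by
    rw [hSn, hP, hQ, ← Finset.Ico_add_one_right_eq_Icc 1 n, ← Finset.Ico_add_one_right_eq_Icc 1 m₁,
      ← Finset.Ico_add_one_right_eq_Icc (m₁ + 1) n]
    exact (Finset.sum_Ico_consecutive _ (by omega) (by omega)).symm
  -- rewrite hvar
  rw [key n le_rfl, ← hSn] at hvar
  have h1 : r 0 = 1 - 2 * Sn / n := by
    field_simp at hvar ⊢
    linarith
  have hL : (m₁ : ℝ)⁻¹ * (∫ ω, (∑ j ∈ Finset.Icc 1 m₁, W j ω) ^ 2 ∂μ) - 1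
      = 2 * Sm / m₁ - 2 * Sn / n := by
    rw [key m₁ hm₁n, h1]
    field_simp
    ring
  rw [hL]
  -- the two pieces
  set A := ∑ d ∈ Finset.Icc 1 m₁,
      (2 * ((m₁ : ℝ) - d) / m₁ - 2 * ((n : ℝ) - d) / n) * r d with hA
  have hsum1 : 2 * Sm / (m₁ : ℝ) = ∑ d ∈ Finset.Icc 1 m₁, 2 * ((m₁ : ℝ) - d) / m₁ * r d := by
    rw [hSm, Finset.mul_sum, Finset.sum_div]
    exact Finset.sum_congr rfl fun d _ => by ring
  have hsum2 : 2 * P / (n : ℝ) = ∑ d ∈ Finset.Icc 1 m₁, 2 * ((n : ℝ) - d) / n * r d := by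
    rw [hP, Finset.mul_sum, Finset.sum_div]
    exact Finset.sum_congr rfl fun d _ => by ring
  have hAeq : A = 2 * Sm / m₁ - 2 * P / n := by
    rw [hsum1, hsum2, ← Finset.sum_sub_distrib]
    exact Finset.sum_congr rfl fun d _ => by ring
  have hDecomp : 2 * Sm / (m₁ : ℝ) - 2 * Sn / n = A - 2 * Q / n := by
    rw [hAeq, hsplit]; ring
  rw [hDecomp]
  -- bound A
  have hAbound : |A| ≤ (2 / (m₁ : ℝ)) * T := by
    calc |A| ≤ ∑ d ∈ Finset.Icc 1 m₁,
        |(2 * ((m₁ : ℝ) - d) / m₁ - 2 * ((n : ℝ) - d) / n) * r d| :=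
          Finset.abs_sum_le_sum_abs _ _
      _ ≤ ∑ d ∈ Finset.Icc 1 m₁, 2 * (d : ℝ) / m₁ * |r d| := by
          refine Finset.sum_le_sum fun d hd => ?_
          simp only [Finset.mem_Icc] at hd
          rw [abs_mul]
          have hd0 : (0 : ℝ) < d := by exact_mod_cast hd.1
          have hcoef : 2 * ((m₁ : ℝ) - d) / m₁ - 2 * ((n : ℝ) - d) / n
              = 2 * d / n - 2 * d / m₁ := by field_simp; ring
          have hcb : |2 * ((m₁ : ℝ) - d) / m₁ - 2 * ((n : ℝ) - d) / n| ≤ 2 * (d : ℝ) / m₁ := by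
            rw [hcoef, abs_le]
            have h01 : (0 : ℝ) ≤ 2 * d / n := by positivity
            have h02 : 2 * (d : ℝ) / n ≤ 2 * d / m₁ := by gcongr
            constructor <;> linarith
          exact mul_le_mul_of_nonneg_right hcb (abs_nonneg _)
      _ = (2 / (m₁ : ℝ)) * ∑ d ∈ Finset.Icc 1 m₁, (d : ℝ) * |r d| := by
          rw [Finset.mul_sum]
          exact Finset.sum_congr rfl fun d _ => by ring
      _ ≤ (2 / (m₁ : ℝ)) * T := by
          refine mul_le_mul_of_nonneg_left ?_ (by positivity)
          refine Finset.sum_le_sum_of_subset_of_nonneg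
            (Finset.Icc_subset_Icc_right hm₁n) fun j _ _ => by positivity
  -- bound Q part
  have hQbound : |2 * Q / (n : ℝ)| ≤ 2 * ∑ j ∈ Finset.Icc (m₁ + 1) (n - 1), |r j| := by
    rcases eq_or_lt_of_le hm₁n with heq | hlt
    · have : Finset.Icc (m₁ + 1) n = ∅ := by rw [heq]; exact Finset.Icc_eq_empty (by omega)
      rw [hQ, this]
      simp only [Finset.sum_empty, mul_zero, zero_div, abs_zero]
      positivity
    · have hQ' : Q = ∑ d ∈ Finset.Icc (m₁ + 1) (n - 1), ((n : ℝ) - d) * r d := by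
        rw [hQ, show n = (n - 1) + 1 by omega, Finset.sum_Icc_succ_top (by omega)]
        rw [show ((n - 1 : ℕ) + 1) = n by omega]
        simp
      rw [abs_div, abs_mul, abs_two, abs_of_pos hn0, div_le_iff₀ hn0, hQ']
      calc 2 * |∑ d ∈ Finset.Icc (m₁ + 1) (n - 1), ((n : ℝ) - d) * r d|
          ≤ 2 * ∑ d ∈ Finset.Icc (m₁ + 1) (n - 1), ((n : ℝ) - d) * |r d| := by
            refine mul_le_mul_of_nonneg_left ?_ (by norm_num)
            refine (Finset.abs_sum_le_sum_abs _ _).trans (Finset.sum_le_sum fun d hd => ?_)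
            simp only [Finset.mem_Icc] at hd
            have : (d : ℝ) ≤ n := by
              have : d ≤ n := by omega
              exact_mod_cast this
            rw [abs_mul, abs_of_nonneg (by linarith : (0:ℝ) ≤ (n : ℝ) - d)]
        _ ≤ 2 * ∑ d ∈ Finset.Icc (m₁ + 1) (n - 1), (n : ℝ) * |r d| := by
            refine mul_le_mul_of_nonneg_left (Finset.sum_le_sum fun d hd => ?_) (by norm_num)
            have hd0 : (0 : ℝ) ≤ d := by positivity
            exact mul_le_mul_of_nonneg_right (by linarith) (abs_nonneg _)
        _ = (2 * ∑ j ∈ Finset.Icc (m₁ + 1) (n - 1), |r j|) * n := by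
            rw [← Finset.mul_sum]; ring
  calc |A - 2 * Q / (n : ℝ)| ≤ |A| + |2 * Q / (n : ℝ)| := abs_sub _ _
    _ ≤ (2 / (m₁ : ℝ)) * T + 2 * ∑ j ∈ Finset.Icc (m₁ + 1) (n - 1), |r j| :=
        add_le_add hAbound hQbound
    _ ≤ 2 * ∑ j ∈ Finset.Icc (m₁ + 1) (n - 1), |r j| + (4 / (m₁ : ℝ)) * T := by
        have : (2 / (m₁ : ℝ)) * T ≤ (4 / (m₁ : ℝ)) * T := by
          refine mul_le_mul_of_nonneg_right ?_ hTpos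
          gcongr <;> norm_num
        linarith
end

section
/- For every t ∈ ℝ and every ε ∈ (0, 1/2), E|E(exp(ιt·1(X ≤ y)) | 𝓒)| = E[(1 − 4G(1 − G) sin²(t/2))^{1/2}] ≤ 1 − (1 − |Ψ_ε(t)|)·P(ε < G < 1 − ε), where |Ψ_ε(t)| = (1 − 4ε(1 − ε) sin²(t/2))^{1/2}. -/
open MeasureTheory Set
open scoped ENNReal

lemma st12_aux_int {Ω : Type*} [mΩ : MeasurableSpace Ω] {μ : Measure Ω} {g : Ω → ℝ}
    (hg : Integrable g μ) (s : Set Ω) :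
    IntegrableOn (fun ω => ((g ω : ℝ) : ℂ)) s μ := hg.ofReal.integrableOn

lemma st12_aux_eq {Ω : Type*} [mΩ : MeasurableSpace Ω] {μ : Measure Ω} {g h : Ω → ℝ} (s : Set Ω)
    (heq : ∫ x in s, g x ∂μ = ∫ x in s, h x ∂μ) :
    ∫ x in s, ((g x : ℝ) : ℂ) ∂μ = ∫ x in s, ((h x : ℝ) : ℂ) ∂μ := by
  calc ∫ x in s, ((g x : ℝ) : ℂ) ∂μ = ((∫ x in s, g x ∂μ : ℝ) : ℂ) := integral_ofReal
    _ = ((∫ x in s, h x ∂μ : ℝ) : ℂ) := by rw [heq]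
    _ = ∫ x in s, ((h x : ℝ) : ℂ) ∂μ := integral_ofReal.symm

lemma st12_condexp_ofReal {Ω : Type*} [mΩ : MeasurableSpace Ω] {μ : Measure Ω}
    [IsProbabilityMeasure μ]
    {m : MeasurableSpace Ω} (hm : m ≤ mΩ) {f : Ω → ℝ} (hf : Integrable f μ) :
    (fun ω => ((μ[f|m]) ω : ℂ)) =ᵐ[μ] μ[(fun ω => ((f ω : ℝ) : ℂ))|m] := by
  haveI : SigmaFinite (μ.trim hm) := by
    have : IsFiniteMeasure (μ.trim hm) := isFiniteMeasure_trim hm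
    infer_instance
  have hI : Integrable (μ[f|m]) μ := integrable_condExp
  exact ae_eq_condExp_of_forall_setIntegral_eq hm hf.ofReal
    (fun s _ _ => st12_aux_int (mΩ := mΩ) hI s)
    (fun s hs _ => st12_aux_eq (mΩ := mΩ) s (setIntegral_condExp (m₀ := mΩ) hm hf hs))
    (Continuous.comp_aestronglyMeasurable Complex.continuous_ofReal
      stronglyMeasurable_condExp.aestronglyMeasurable)

/-- pointwise modulus computation -/
lemma st12_abs_eq (t g : ℝ) (hg0 : 0 ≤ g) (hg1 : g ≤ 1) :
    ‖(Complex.exp (Complex.I * (t : ℂ)) - 1) * (g : ℂ) + 1‖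
      = Real.sqrt (1 - 4 * g * (1 - g) * Real.sin (t / 2) ^ 2) := by
  have hIt : Complex.I * (t : ℂ) = (t : ℂ) * Complex.I := mul_comm _ _
  rw [hIt, Complex.exp_mul_I, ← Complex.ofReal_cos, ← Complex.ofReal_sin,
    Complex.norm_def, Complex.normSq_apply]
  have h1 := Real.sin_sq_add_cos_sq (t / 2)
  have h2 := Real.cos_two_mul (t / 2)
  have h3 : (2 : ℝ) * (t / 2) = t := by ring
  rw [h3] at h2
  have h4 := Real.sin_sq_add_cos_sq t
  have hC : Real.cos t = 1 - 2 * Real.sin (t / 2) ^ 2 := by linarith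
  congr 1
  simp only [Complex.add_re, Complex.add_im, Complex.mul_re, Complex.mul_im, Complex.sub_re,
    Complex.sub_im, Complex.ofReal_re, Complex.ofReal_im, Complex.I_re, Complex.I_im,
    Complex.one_re, Complex.one_im]
  linear_combination g ^ 2 * h4 + 2 * g * (1 - g) * hC

lemma st12_bdd_integrable {Ω : Type*} [mΩ : MeasurableSpace Ω] (μ : Measure Ω)
    [IsFiniteMeasure μ] {f : Ω → ℝ} (hf : Measurable f) (C : ℝ) (h : ∀ ω, |f ω| ≤ C) :
    Integrable f μ :=
  (integrable_const C).mono' hf.aestronglyMeasurable (Filter.Eventually.of_forall h)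

lemma st12_chi_meas {Ω : Type*} [mΩ : MeasurableSpace Ω] {X : Ω → ℝ} (hX : Measurable X)
    (y : ℝ) : Measurable (fun ω => if X ω ≤ y then (1 : ℝ) else 0) :=
  Measurable.ite (hX measurableSet_Iic) measurable_const measurable_const

lemma st12_A_meas {Ω : Type*} [mΩ : MeasurableSpace Ω] {G : Ω → ℝ} (hG : Measurable G)
    (a b : ℝ) : MeasurableSet {ω | a < G ω ∧ G ω < b} :=
  hG measurableSet_Ioo

lemma st12_sq_meas {Ω : Type*} [mΩ : MeasurableSpace Ω] {G : Ω → ℝ} (hG : Measurable G)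
    (s : ℝ) : Measurable (fun ω => Real.sqrt (1 - 4 * G ω * (1 - G ω) * s)) :=
  Real.continuous_sqrt.measurable.comp
    ((measurable_const.sub (((hG.const_mul 4).mul (measurable_const.sub hG)).mul
      measurable_const)))

lemma st12_ind_int {Ω : Type*} [mΩ : MeasurableSpace Ω] (μ : Measure Ω) [IsFiniteMeasure μ]
    {A : Set Ω} (hA : MeasurableSet A) (r : ℝ) :
    Integrable (fun ω => 1 - r * A.indicator (fun _ => (1 : ℝ)) ω) μ :=
  (integrable_const 1).sub (((integrable_const (1 : ℝ)).indicator hA).const_mul _)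

lemma st12_ind_integral {Ω : Type*} [mΩ : MeasurableSpace Ω] (μ : Measure Ω)
    [IsProbabilityMeasure μ] {A : Set Ω} (hA : MeasurableSet A) (r : ℝ) :
    ∫ ω, (1 - r * A.indicator (fun _ => (1 : ℝ)) ω) ∂μ = 1 - r * (μ A).toReal := by
  rw [integral_sub (integrable_const 1)
    (((integrable_const (1 : ℝ)).indicator hA).const_mul _)]
  rw [integral_const, integral_const_mul, integral_indicator_const (1 : ℝ) hA]
  simp [measureReal_def]

/-- Let `G` be a version of `P(X ≤ y | 𝓒)` with values in `[0,1]`. For every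
`t ∈ ℝ` and every `ε ∈ (0,1/2)`,
`E|E(exp(ιt·1(X ≤ y)) | 𝓒)| = E[(1 − 4G(1 − G)sin²(t/2))^{1/2}]
  ≤ 1 − (1 − |Ψ_ε(t)|)·P(ε < G < 1 − ε)`,
where `|Ψ_ε(t)| = (1 − 4ε(1 − ε)sin²(t/2))^{1/2}`. -/
theorem stmt12 {Ω : Type*} [mΩ : MeasurableSpace Ω] (μ : Measure Ω) [IsProbabilityMeasure μ]
    (X : Ω → ℝ) (hX : Measurable X)
    (𝓒 : MeasurableSpace Ω) (h𝓒 : 𝓒 ≤ mΩ)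
    (y : ℝ) (G : Ω → ℝ) (hGmeas : Measurable G) (hG01 : ∀ ω, G ω ∈ Icc (0 : ℝ) 1)
    (hGver : G =ᵐ[μ] μ[(fun ω => if X ω ≤ y then (1 : ℝ) else 0) | 𝓒])
    (t : ℝ) (ε : ℝ) (hε : ε ∈ Ioo (0 : ℝ) (1 / 2)) :
    (∫ ω, ‖
        ((μ[(fun ω => Complex.exp (Complex.I * (t : ℂ) *
            (if X ω ≤ y then (1 : ℂ) else 0))) | 𝓒]) ω)‖ ∂μ)
      = ∫ ω, Real.sqrt (1 - 4 * G ω * (1 - G ω) * Real.sin (t / 2) ^ 2) ∂μ ∧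
    (∫ ω, Real.sqrt (1 - 4 * G ω * (1 - G ω) * Real.sin (t / 2) ^ 2) ∂μ)
      ≤ 1 - (1 - Real.sqrt (1 - 4 * ε * (1 - ε) * Real.sin (t / 2) ^ 2))
          * (μ {ω | ε < G ω ∧ G ω < 1 - ε}).toReal := by
  classical
  have hGm : @Measurable Ω ℝ mΩ _ G := hGmeas.mono h𝓒 le_rfl
  set χ : Ω → ℝ := fun ω => if X ω ≤ y then (1 : ℝ) else 0 with hχdef
  have hχmeas := st12_chi_meas (mΩ := mΩ) hX y
  have hχint : Integrable χ μ := by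
    refine st12_bdd_integrable (mΩ := mΩ) μ hχmeas 1 fun ω => ?_
    by_cases h : X ω ≤ y <;> simp [hχdef, h]
  set c : ℂ := Complex.exp (Complex.I * (t : ℂ)) - 1 with hcdef
  have hfun : (fun ω => Complex.exp (Complex.I * (t : ℂ) *
      (if X ω ≤ y then (1 : ℂ) else 0)))
      = (fun ω => c * ((χ ω : ℝ) : ℂ)) + (fun _ => (1 : ℂ)) := by
    funext ω
    by_cases h : X ω ≤ y <;> simp [hχdef, h, hcdef] <;> ring
  have hcχint : Integrable (fun ω => c * ((χ ω : ℝ) : ℂ)) μ := hχint.ofReal.const_mul c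
  have key : (μ[(fun ω => Complex.exp (Complex.I * (t : ℂ) *
      (if X ω ≤ y then (1 : ℂ) else 0))) | 𝓒])
      =ᵐ[μ] fun ω => c * (G ω : ℂ) + 1 := by
    rw [hfun]
    have h1 := condExp_add (m := 𝓒) hcχint (integrable_const (1 : ℂ))
    have h2 : μ[(fun _ => (1 : ℂ)) | 𝓒] = fun _ => (1 : ℂ) := condExp_const h𝓒 1
    have h3 : μ[(fun ω => c * ((χ ω : ℝ) : ℂ)) | 𝓒] =ᵐ[μ]
        c • μ[(fun ω => ((χ ω : ℝ) : ℂ)) | 𝓒] := condExp_smul (m := 𝓒) c _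
    have h4 : (fun ω => ((μ[χ | 𝓒]) ω : ℂ)) =ᵐ[μ] μ[(fun ω => ((χ ω : ℝ) : ℂ)) | 𝓒] :=
      st12_condexp_ofReal (mΩ := mΩ) h𝓒 hχint
    have h5 : (fun ω => (G ω : ℂ)) =ᵐ[μ] (fun ω => ((μ[χ | 𝓒]) ω : ℂ)) :=
      hGver.fun_comp Complex.ofReal
    filter_upwards [h1, h3, h4, h5] with ω e1 e3 e4 e5
    have e6 : (μ[(fun ω => ((χ ω : ℝ) : ℂ)) | 𝓒]) ω = (G ω : ℂ) := by rw [← e4, ← e5]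
    simp only [Pi.add_apply, Pi.smul_apply, smul_eq_mul] at *
    rw [e1, e3, e6, h2]
  have eq1 : (∫ ω, ‖
        ((μ[(fun ω => Complex.exp (Complex.I * (t : ℂ) *
            (if X ω ≤ y then (1 : ℂ) else 0))) | 𝓒]) ω)‖ ∂μ)
      = ∫ ω, Real.sqrt (1 - 4 * G ω * (1 - G ω) * Real.sin (t / 2) ^ 2) ∂μ := by
    refine integral_congr_ae (key.mono fun ω hω => ?_)
    dsimp only at hω ⊢
    rw [hω]
    exact st12_abs_eq t (G ω) (hG01 ω).1 (hG01 ω).2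
  refine ⟨eq1, ?_⟩
  obtain ⟨hε0, hε12⟩ := hε
  set s := Real.sin (t / 2) ^ 2 with hsdef
  have hs0 : 0 ≤ s := sq_nonneg _
  set cε : ℝ := Real.sqrt (1 - 4 * ε * (1 - ε) * s) with hcεdef
  have hcε1 : cε ≤ 1 := by
    rw [hcεdef, Real.sqrt_le_one]
    nlinarith [mul_nonneg (mul_nonneg hε0.le (by linarith : (0:ℝ) ≤ 1 - ε)) hs0]
  set A : Set Ω := {ω | ε < G ω ∧ G ω < 1 - ε} with hAdef
  have hA : MeasurableSet[mΩ] A := st12_A_meas (mΩ := mΩ) hGm ε (1 - ε)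
  have hsqmeas := st12_sq_meas (mΩ := mΩ) hGm s
  have hsqint : Integrable (fun ω => Real.sqrt (1 - 4 * G ω * (1 - G ω) * s)) μ := by
    refine st12_bdd_integrable (mΩ := mΩ) μ hsqmeas 1 fun ω => ?_
    have h0 : (0 : ℝ) ≤ Real.sqrt (1 - 4 * G ω * (1 - G ω) * s) := Real.sqrt_nonneg _
    have h1 : Real.sqrt (1 - 4 * G ω * (1 - G ω) * s) ≤ 1 := by
      rw [Real.sqrt_le_one]
      obtain ⟨hg0, hg1⟩ := hG01 ω
      nlinarith [mul_nonneg (mul_nonneg hg0 (by linarith : (0:ℝ) ≤ 1 - G ω)) hs0]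
    rw [abs_le]; exact ⟨by linarith, h1⟩
  have hmono : ∀ ω, Real.sqrt (1 - 4 * G ω * (1 - G ω) * s)
      ≤ 1 - (1 - cε) * A.indicator (fun _ => (1 : ℝ)) ω := by
    intro ω
    obtain ⟨hg0, hg1⟩ := hG01 ω
    by_cases hω : ω ∈ A
    · rw [indicator_of_mem hω]
      obtain ⟨h1, h2⟩ := hω
      have : Real.sqrt (1 - 4 * G ω * (1 - G ω) * s) ≤ cε := by
        rw [hcεdef]
        apply Real.sqrt_le_sqrt
        nlinarith [mul_nonneg (mul_nonneg (le_of_lt (sub_pos.2 h1))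
          (le_of_lt (sub_pos.2 h2))) hs0]
      linarith
    · rw [indicator_of_notMem hω]
      have : Real.sqrt (1 - 4 * G ω * (1 - G ω) * s) ≤ 1 := by
        rw [Real.sqrt_le_one]
        nlinarith [mul_nonneg (mul_nonneg hg0 (by linarith : (0:ℝ) ≤ 1 - G ω)) hs0]
      linarith
  calc (∫ ω, Real.sqrt (1 - 4 * G ω * (1 - G ω) * s) ∂μ)
      ≤ ∫ ω, (1 - (1 - cε) * A.indicator (fun _ => (1 : ℝ)) ω) ∂μ :=
        integral_mono hsqint (st12_ind_int (mΩ := mΩ) μ hA (1 - cε)) hmono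
    _ = 1 - (1 - cε) * (μ A).toReal := st12_ind_integral (mΩ := mΩ) μ hA (1 - cε)
end

section
/- If g(ξ_p) < p, then there exist δ₀ > 0, δ₁ ∈ (0, δ₀] and ε ∈ (0, δ₀/8) such that for all y with |y − ξ_p| < δ₁, P({ω : ε < G(y; ω) < 1 − ε}) ≥ δ₀/4. -/
open MeasureTheory Set Filter

lemma stmt13_int_ind {Ω : Type*} [mΩ : MeasurableSpace Ω] (μ : Measure Ω) {s : Set Ω}
    (hs : MeasurableSet s) :
    ∫ ω, Set.indicator s (fun _ => (1:ℝ)) ω ∂μ = (μ s).toReal := by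
  rw [integral_indicator_const (1:ℝ) hs]; simp; rfl

theorem stmt13_aux {Ω : Type*} [mΩ : MeasurableSpace Ω] (μ : Measure Ω) [IsProbabilityMeasure μ]
    (F : ℝ → ℝ) (p : ℝ) (hp : p ∈ Ioo (0 : ℝ) 1) (ξ : ℝ)
    (hFcont : ContinuousAt F ξ) (hFξ : F ξ = p)
    (G : ℝ → Ω → ℝ) (hGmeas : ∀ y, Measurable (G y))
    (hint : ∀ y, ∫ ω, G y ω ∂μ = F y)
    (hGmono : ∀ ω, Monotone (fun y => G y ω))
    (hGrc : ∀ ω y, ContinuousWithinAt (fun y => G y ω) (Ici y) y)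
    (hG01 : ∀ ω y, G y ω ∈ Icc (0 : ℝ) 1)
    (g : ℝ → ℝ) (hg : ∀ y, g y = (μ {ω | G y ω = 1}).toReal)
    (hgξ : g ξ < p) :
    ∃ δ₀ > (0 : ℝ), ∃ δ₁ ∈ Ioc (0 : ℝ) δ₀, ∃ ε ∈ Ioo (0 : ℝ) (δ₀ / 8),
      ∀ y : ℝ, |y - ξ| < δ₁ →
        δ₀ / 4 ≤ (μ {ω | ε < G y ω ∧ G y ω < 1 - ε}).toReal := by
  set a : ℝ := p - g ξ with ha_def
  have hgξ0 : 0 ≤ g ξ := by rw [hg]; exact ENNReal.toReal_nonneg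
  have ha : 0 < a := by simp only [ha_def]; linarith
  have hap : a ≤ p := by simp only [ha_def]; linarith
  have hpa2 : 0 < p - a / 2 := by linarith
  -- measurability of level sets
  have hmS : ∀ (y c : ℝ), MeasurableSet {ω | c ≤ G y ω} := fun y c =>
    measurableSet_le measurable_const (hGmeas y)
  have hmS' : ∀ (y c : ℝ), MeasurableSet {ω | c < G y ω} := fun y c =>
    measurableSet_lt measurable_const (hGmeas y)
  -- Step A: choose ε
  have stepA : ∃ ε : ℝ, 0 < ε ∧ ε < a / 16 ∧
      (μ {ω | 1 - 2 * ε ≤ G ξ ω}) < ENNReal.ofReal (p - a / 2) := by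
    set s : ℕ → Set Ω := fun n => {ω | 1 - 2 * ((1:ℝ)/(n+1)) ≤ G ξ ω} with hs_def
    have hanti : Antitone s := by
      intro m n hmn ω hω
      simp only [hs_def, Set.mem_setOf_eq] at *
      have h1 : (1:ℝ)/(n+1) ≤ 1/(m+1) := by
        apply one_div_le_one_div_of_le (by positivity)
        exact_mod_cast Nat.succ_le_succ hmn
      linarith
    have hiInter : ⋂ n : ℕ, s n = {ω | G ξ ω = 1} := by
      ext ω; simp only [hs_def, Set.mem_iInter, Set.mem_setOf_eq]
      constructor
      · intro h
        have hle : 1 ≤ G ξ ω := by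
          by_contra hc; push_neg at hc
          obtain ⟨n, hn⟩ := exists_nat_one_div_lt (show 0 < (1 - G ξ ω)/2 by linarith)
          have := h n
          linarith
        exact le_antisymm (hG01 ω ξ).2 hle
      · intro h n; rw [h]
        have : (0:ℝ) < 1/(n+1) := by positivity
        linarith
    have htend := tendsto_measure_iInter_atTop (μ := μ) (s := s)
      (fun n => (hmS ξ _).nullMeasurableSet) hanti ⟨0, measure_ne_top μ _⟩
    rw [hiInter] at htend
    have hlim : μ {ω | G ξ ω = 1} < ENNReal.ofReal (p - a / 2) := by
      rw [ENNReal.lt_ofReal_iff_toReal_lt (measure_ne_top μ _), ← hg ξ]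
      linarith
    have hev1 : ∀ᶠ n : ℕ in atTop, μ (s n) < ENNReal.ofReal (p - a / 2) :=
      htend.eventually_lt_const hlim
    have hev2 : ∀ᶠ n : ℕ in atTop, (1:ℝ)/(n+1) < a/16 := by
      obtain ⟨n₀, hn₀⟩ := exists_nat_one_div_lt (show 0 < a/16 by linarith)
      filter_upwards [eventually_ge_atTop n₀] with n hn
      have : (1:ℝ)/(n+1) ≤ 1/(n₀+1) := by
        apply one_div_le_one_div_of_le (by positivity)
        exact_mod_cast Nat.succ_le_succ hn
      linarith
    obtain ⟨N, h1, h2⟩ := (hev1.and hev2).exists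
    exact ⟨1/(N+1), by positivity, h2, h1⟩
  obtain ⟨ε, hε0, hε16, hA⟩ := stepA
  -- Step B: choose y₀ > ξ
  have stepB : ∃ y₀ : ℝ, ξ < y₀ ∧
      (μ {ω | 1 - 2 * ε ≤ G y₀ ω}) < ENNReal.ofReal (p - a / 2) := by
    set t : ℕ → Set Ω := fun n => {ω | 1 - 2 * ε ≤ G (ξ + (1:ℝ)/(n+1)) ω} with ht_def
    have hanti : Antitone t := by
      intro m n hmn ω hω
      simp only [ht_def, Set.mem_setOf_eq] at *
      have h1 : (1:ℝ)/(n+1) ≤ 1/(m+1) := by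
        apply one_div_le_one_div_of_le (by positivity)
        exact_mod_cast Nat.succ_le_succ hmn
      exact le_trans hω (hGmono ω (by linarith))
    have hiInter : ⋂ n : ℕ, t n = {ω | 1 - 2 * ε ≤ G ξ ω} := by
      ext ω; simp only [ht_def, Set.mem_iInter, Set.mem_setOf_eq]
      constructor
      · intro h
        have hseq : Tendsto (fun n : ℕ => ξ + (1:ℝ)/(n+1)) atTop (nhdsWithin ξ (Ici ξ)) := by
          rw [tendsto_nhdsWithin_iff]
          constructor
          · have h0 : Tendsto (fun n : ℕ => (1:ℝ)/(n+1)) atTop (nhds 0) :=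
              tendsto_one_div_add_atTop_nhds_zero_nat
            have := (tendsto_const_nhds (x := ξ) (f := atTop (α := ℕ))).add h0
            simpa using this
          · filter_upwards with n
            have : (0:ℝ) < 1/(n+1) := by positivity
            simp only [Set.mem_Ici]; linarith
        have hlim : Tendsto (fun n : ℕ => G (ξ + (1:ℝ)/(n+1)) ω) atTop (nhds (G ξ ω)) :=
          (hGrc ω ξ).tendsto.comp hseq
        exact ge_of_tendsto' hlim h
      · intro h n
        exact le_trans h (hGmono ω (le_add_of_nonneg_right (by positivity)))
    have htend := tendsto_measure_iInter_atTop (μ := μ) (s := t)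
      (fun n => (hmS _ _).nullMeasurableSet) hanti ⟨0, measure_ne_top μ _⟩
    rw [hiInter] at htend
    have hev1 : ∀ᶠ n : ℕ in atTop, μ (t n) < ENNReal.ofReal (p - a / 2) :=
      htend.eventually_lt_const hA
    obtain ⟨M, hM⟩ := hev1.exists
    exact ⟨ξ + 1/(M+1), lt_add_of_pos_right ξ (by positivity), hM⟩
  obtain ⟨y₀, hy₀, hB⟩ := stepB
  -- Step C: continuity of F
  obtain ⟨δF, hδF0, hδF⟩ : ∃ δF > (0:ℝ), ∀ y, |y - ξ| < δF → |F y - p| < a / 16 := by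
    have := Metric.continuousAt_iff.mp hFcont (a/16) (by linarith)
    obtain ⟨δ, hδ0, hδ⟩ := this
    exact ⟨δ, hδ0, fun y hy => by
      have := hδ (show dist y ξ < δ by rwa [Real.dist_eq]); rwa [Real.dist_eq, hFξ] at this⟩
  refine ⟨a, ha, min δF (min (y₀ - ξ) a), ⟨?_, ?_⟩, ε, ⟨hε0, by linarith⟩, ?_⟩
  · exact lt_min hδF0 (lt_min (by linarith) ha)
  · exact le_trans (min_le_right _ _) (min_le_right _ _)
  intro y hy
  have hyF : |y - ξ| < δF := lt_of_lt_of_le hy (min_le_left _ _)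
  have hyy₀ : y ≤ y₀ := by
    have h1 : |y - ξ| < y₀ - ξ := lt_of_lt_of_le hy (le_trans (min_le_right _ _) (min_le_left _ _))
    have h2 := abs_lt.mp h1
    linarith [h2.2]
  have hε12 : ε < 1/2 := by linarith [hp.2]
  -- upper tail bound
  have hupper : (μ {ω | 1 - ε ≤ G y ω}).toReal < p - a / 2 := by
    have hsub : {ω | 1 - ε ≤ G y ω} ⊆ {ω | 1 - 2 * ε ≤ G y₀ ω} := by
      intro ω hω
      have h1 : G y ω ≤ G y₀ ω := hGmono ω hyy₀
      have h2 : (1:ℝ) - ε ≤ G y ω := hω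
      simp only [Set.mem_setOf_eq]; linarith
    have := lt_of_le_of_lt (measure_mono hsub) hB
    rw [ENNReal.lt_ofReal_iff_toReal_lt (measure_ne_top μ _)] at this
    exact this
  -- lower bound on μ {ε < G y}
  have hlower : p - a/8 ≤ (μ {ω | ε < G y ω}).toReal := by
    have hGint : Integrable (G y) μ := by
      refine Integrable.mono' (integrable_const (1:ℝ)) (hGmeas y).aestronglyMeasurable ?_
      filter_upwards with ω
      rw [Real.norm_eq_abs, abs_le]
      exact ⟨by linarith [(hG01 ω y).1], (hG01 ω y).2⟩
    have hpt : ∀ ω, G y ω ≤ ε + Set.indicator {ω | ε < G y ω} (fun _ => (1:ℝ)) ω := by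
      intro ω
      by_cases h : ε < G y ω
      · rw [Set.indicator_of_mem (show ω ∈ {ω | ε < G y ω} from h)]
        linarith [(hG01 ω y).2]
      · rw [Set.indicator_of_notMem (show ω ∉ {ω | ε < G y ω} from h)]
        push_neg at h; linarith
    have hIind : Integrable (fun ω => ε + Set.indicator {ω | ε < G y ω} (fun _ => (1:ℝ)) ω) μ :=
      (integrable_const ε).add ((integrable_const (1:ℝ)).indicator (hmS' y ε))
    have hle : ∫ ω, G y ω ∂μ ≤ ε + (μ {ω | ε < G y ω}).toReal := by
      calc ∫ ω, G y ω ∂μ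
          ≤ ∫ ω, (ε + Set.indicator {ω | ε < G y ω} (fun _ => (1:ℝ)) ω) ∂μ :=
            integral_mono hGint hIind hpt
        _ = ε + (μ {ω | ε < G y ω}).toReal := by
            rw [integral_add (integrable_const ε) ((integrable_const (1:ℝ)).indicator (hmS' y ε)),
              integral_const]
            have h2 := integral_indicator_const (μ := μ) (1:ℝ) (hmS' y ε)
            simp only [smul_eq_mul, mul_one] at h2
            rw [h2]
            simp
            rfl
    have hFy : p - a/16 < F y := by
      have := abs_lt.mp (hδF y hyF)
      linarith [this.1]
    rw [hint y] at hle
    linarith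
  -- combine
  have hss : {ω | 1 - ε ≤ G y ω} ⊆ {ω | ε < G y ω} := by
    intro ω hω
    have h1 : (1:ℝ) - ε ≤ G y ω := hω
    simp only [Set.mem_setOf_eq]; linarith
  have hdiff : {ω | ε < G y ω ∧ G y ω < 1 - ε}
      = {ω | ε < G y ω} \ {ω | 1 - ε ≤ G y ω} := by
    ext ω; simp only [Set.mem_setOf_eq, Set.mem_diff, not_le]
  have hmeq : μ {ω | ε < G y ω ∧ G y ω < 1 - ε}
      = μ {ω | ε < G y ω} - μ {ω | 1 - ε ≤ G y ω} := by
    rw [hdiff]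
    exact measure_diff hss (hmS y (1-ε)).nullMeasurableSet (measure_ne_top μ _)
  have htr : (μ {ω | ε < G y ω ∧ G y ω < 1 - ε}).toReal
      = (μ {ω | ε < G y ω}).toReal - (μ {ω | 1 - ε ≤ G y ω}).toReal := by
    rw [hmeq, ENNReal.toReal_sub_of_le (measure_mono hss) (measure_ne_top μ _)]
  rw [htr]
  linarith

/-- Let `G(y;·)` be a regular conditional distribution function of `X₁` given
`𝓒`, `g(y) = P(G(y;·) = 1)`, and `ξ_p` the `p`-th quantile of `F`, `F` continuous at `ξ_p`
(so `F(ξ_p) = p`). If `g(ξ_p) < p`, then there exist `δ₀ > 0`, `δ₁ ∈ (0, δ₀]` and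
`ε ∈ (0, δ₀/8)` such that for all `y` with `|y − ξ_p| < δ₁`,
`P(ε < G(y;·) < 1 − ε) ≥ δ₀/4`. -/
theorem stmt13 {Ω : Type*} [mΩ : MeasurableSpace Ω] (μ : Measure Ω) [IsProbabilityMeasure μ]
    (X : Ω → ℝ) (hX : Measurable X)
    (𝓒 : MeasurableSpace Ω) (h𝓒 : 𝓒 ≤ mΩ)
    (F : ℝ → ℝ) (hF : ∀ x, F x = (μ {ω | X ω ≤ x}).toReal)
    (p : ℝ) (hp : p ∈ Ioo (0 : ℝ) 1)
    (ξ : ℝ) (hξ : ξ = sInf {x | p ≤ F x})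
    (hFcont : ContinuousAt F ξ) (hFξ : F ξ = p)
    (G : ℝ → Ω → ℝ) (hGmeas : ∀ y, Measurable (G y))
    (hGver : ∀ y, G y =ᵐ[μ] μ[(fun ω => if X ω ≤ y then (1 : ℝ) else 0) | 𝓒])
    (hGmono : ∀ ω, Monotone (fun y => G y ω))
    (hGrc : ∀ ω y, ContinuousWithinAt (fun y => G y ω) (Ici y) y)
    (hG01 : ∀ ω y, G y ω ∈ Icc (0 : ℝ) 1)
    (g : ℝ → ℝ) (hg : ∀ y, g y = (μ {ω | G y ω = 1}).toReal)
    (hgξ : g ξ < p) :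
    ∃ δ₀ > (0 : ℝ), ∃ δ₁ ∈ Ioc (0 : ℝ) δ₀, ∃ ε ∈ Ioo (0 : ℝ) (δ₀ / 8),
      ∀ y : ℝ, |y - ξ| < δ₁ →
        δ₀ / 4 ≤ (μ {ω | ε < G y ω ∧ G y ω < 1 - ε}).toReal := by
  have hint : ∀ y, ∫ ω, G y ω ∂μ = F y := by
    intro y
    have hmeasS : MeasurableSet[mΩ] {ω | X ω ≤ y} := hX measurableSet_Iic
    have hind : (fun ω => if X ω ≤ y then (1:ℝ) else 0)
        = Set.indicator {ω | X ω ≤ y} (fun _ => (1:ℝ)) := by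
      funext ω; by_cases h : X ω ≤ y <;> simp [Set.indicator, h]
    calc ∫ ω, G y ω ∂μ
        = ∫ ω, (μ[(fun ω => if X ω ≤ y then (1:ℝ) else 0)|𝓒]) ω ∂μ :=
          integral_congr_ae (hGver y)
      _ = ∫ ω, (if X ω ≤ y then (1:ℝ) else 0) ∂μ := integral_condExp h𝓒
      _ = (μ {ω | X ω ≤ y}).toReal := by
          rw [hind]
          exact stmt13_int_ind (mΩ := mΩ) μ hmeasS
      _ = F y := (hF y).symm
  exact stmt13_aux (mΩ := mΩ) μ F p hp ξ hFcont hFξ G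
    (fun y => (hGmeas y).mono h𝓒 le_rfl) hint hGmono hGrc hG01 g hg hgξ
end
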